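/- Let K ⊆ E be a polyhedral closed convex cone in a finite-dimensional space and A : X → E a linear map. Suppose that the set-valued mapping b* ↦ S(b*) := {μ ∈ K* ∩ {s}^⊥ : A* μ = b*} has nonempty values on its domain, where s ∈ K is fixed and K* ∩ {s}^⊥ is a face of the polyhedral cone K*. Then S is Lipschitz continuous with respect to the Hausdorff distance on its domain: there is L > 0 such that for all b₁*, b₂* in the domain of S, S(b₁*) ⊆ S(b₂*) + L‖b₁* − b₂*‖·B. -/

import Mathlib

open Set
open scoped Pointwise

variable {E : Type*} [NormedAddCommGroup E] [InnerProductSpace ℝ E]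

/-- The polar cone `K* = {μ : ⟪μ, k⟫ ≤ 0 for all k ∈ K}`. -/
def polarCone (K : Set E) : Set E := {μ | ∀ k ∈ K, @inner ℝ _ _ μ k ≤ 0}

section AuxiliaryLemmas
open scoped RealInnerProductSpace

/-- Carathéodory's theorem for conic combinations. -/
lemma caratheodory_cone {ι : Type*} [DecidableEq ι] (v : ι → E) (s : Finset ι) :
    ∀ l : ι → ℝ, (∀ i ∈ s, 0 ≤ l i) →
    ∃ t : Finset ι, t ⊆ s ∧ LinearIndependent ℝ (fun i : t => v i) ∧
      ∃ μ : ι → ℝ, (∀ i ∈ t, 0 ≤ μ i) ∧ ∑ i ∈ t, μ i • v i = ∑ i ∈ s, l i • v i := by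
  induction s using Finset.strongInduction with
  | _ s ih =>
    intro l hl
    by_cases hli : LinearIndependent ℝ (fun i : s => v i)
    · exact ⟨s, Finset.Subset.refl s, hli, l, hl, rfl⟩
    · obtain ⟨g, hg0, j, hgj⟩ := Fintype.not_linearIndependent_iff.1 hli
      -- choose a sign so that some coefficient is positive
      set g' : s → ℝ := if 0 < g j then g else -g with hg'
      have hg'j : 0 < g' j := by
        rcases lt_trichotomy (g j) 0 with h | h | h
        · simp [hg', not_lt.2 h.le, h]
        · exact absurd h hgj
        · simp [hg', h]
      have hg'0 : ∑ i : s, g' i • v i = 0 := by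
        rcases ite_eq_or_eq (0 < g j) g (-g) with h | h <;> rw [hg', h]
        · exact hg0
        · simp only [Pi.neg_apply, neg_smul]
          rw [Finset.sum_neg_distrib, hg0, neg_zero]
      set G : ι → ℝ := fun i => if h : i ∈ s then g' ⟨i, h⟩ else 0 with hG
      have hGsum : ∑ i ∈ s, G i • v i = 0 := by
        rw [← Finset.sum_attach s (fun i => G i • v i)]
        rw [← hg'0, ← Finset.univ_eq_attach]
        refine Finset.sum_congr rfl fun i _ => ?_
        simp [hG]
      have hjP : (↑j : ι) ∈ s.filter (fun i => 0 < G i) := by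
        refine Finset.mem_filter.2 ⟨j.2, ?_⟩
        simpa [hG, j.2] using hg'j
      obtain ⟨i₀, hi₀, hmin⟩ := Finset.exists_min_image (s.filter (fun i => 0 < G i))
        (fun i => l i / G i) ⟨j, hjP⟩
      have hi₀s : i₀ ∈ s := (Finset.mem_filter.1 hi₀).1
      have hGi₀ : 0 < G i₀ := (Finset.mem_filter.1 hi₀).2
      set r : ℝ := l i₀ / G i₀ with hr
      have hr0 : 0 ≤ r := div_nonneg (hl i₀ hi₀s) hGi₀.le
      set l' : ι → ℝ := fun i => l i - r * G i with hl'def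
      have hl' : ∀ i ∈ s, 0 ≤ l' i := by
        intro i hi
        by_cases hGi : 0 < G i
        · have h1 : r ≤ l i / G i := hmin i (Finset.mem_filter.2 ⟨hi, hGi⟩)
          have := (le_div_iff₀ hGi).1 h1
          simp only [hl'def]; linarith
        · have h1 : r * G i ≤ 0 :=
            mul_nonpos_of_nonneg_of_nonpos hr0 (not_lt.1 hGi)
          have := hl i hi
          simp only [hl'def]; linarith
      have hl'i₀ : l' i₀ = 0 := by
        simp only [hl'def, hr]
        field_simp
        ring
      have hsum' : ∑ i ∈ s, l' i • v i = ∑ i ∈ s, l i • v i := by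
        simp only [hl'def, sub_smul, Finset.sum_sub_distrib, mul_smul]
        rw [← Finset.smul_sum, hGsum, smul_zero, sub_zero]
      obtain ⟨t, hts, hind, μ, hμ0, hμsum⟩ :=
        ih (s.erase i₀) (Finset.erase_ssubset hi₀s) l'
          (fun i hi => hl' i (Finset.erase_subset _ _ hi))
      refine ⟨t, hts.trans (Finset.erase_subset _ _), hind, μ, hμ0, ?_⟩
      rw [hμsum, Finset.sum_erase_eq_sub hi₀s, hl'i₀, zero_smul, sub_zero, hsum']

noncomputable def combMap {ι : Type*} (v : ι → E) (t : Finset ι) : (t → ℝ) →ₗ[ℝ] E where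
  toFun := fun c => ∑ i : t, c i • v ↑i
  map_add' := by intro a b; simp [add_smul, Finset.sum_add_distrib]
  map_smul' := by intro r a; simp [smul_smul, Finset.smul_sum]

lemma combMap_ker {ι : Type*} (v : ι → E) (t : Finset ι)
    (h : LinearIndependent ℝ (fun i : t => v i)) :
    LinearMap.ker (combMap v t) = ⊥ := by
  rw [LinearMap.ker_eq_bot']
  intro c hc
  funext i
  exact Fintype.linearIndependent_iff.1 h c hc i

/-- Farkas' lemma, with a linearly independent representation. -/
lemma farkas {ι : Type*} [Fintype ι] [DecidableEq ι] [FiniteDimensional ℝ E]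
    (v : ι → E) (x : E)
    (h : ∀ d : E, (∀ i, ⟪v i, d⟫ ≤ 0) → ⟪x, d⟫ ≤ 0) :
    ∃ t : Finset ι, LinearIndependent ℝ (fun i : t => v i) ∧
      ∃ μ : ι → ℝ, (∀ i ∈ t, 0 ≤ μ i) ∧ x = ∑ i ∈ t, μ i • v i := by
  set W : Set E := {y | ∃ c : ι → ℝ, (∀ i, 0 ≤ c i) ∧ y = ∑ i, c i • v i} with hW
  have hWconv : Convex ℝ W := by
    rintro y ⟨cy, hcy, rfl⟩ z ⟨cz, hcz, rfl⟩ a b ha hb hab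
    refine ⟨fun i => a * cy i + b * cz i,
      fun i => add_nonneg (mul_nonneg ha (hcy i)) (mul_nonneg hb (hcz i)), ?_⟩
    simp [Finset.smul_sum, smul_smul, add_smul, Finset.sum_add_distrib]
  have hWclosed : IsClosed W := by
    have hWeq : W = ⋃ t ∈ {t : Finset ι | LinearIndependent ℝ (fun i : t => v i)},
        (combMap v t) '' {c : t → ℝ | ∀ i, 0 ≤ c i} := by
      ext y
      simp only [Set.mem_iUnion, Set.mem_image, Set.mem_setOf_eq, hW]
      constructor
      · rintro ⟨c, hc, rfl⟩
        obtain ⟨t, -, hind, μ, hμ0, hμsum⟩ :=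
          caratheodory_cone v Finset.univ c (fun i _ => hc i)
        refine ⟨t, hind, fun i => μ ↑i, fun i => hμ0 ↑i i.2, ?_⟩
        show ∑ i : t, μ ↑i • v ↑i = _
        rw [Finset.univ_eq_attach, Finset.sum_attach t (fun i => μ i • v i), hμsum]
      · rintro ⟨t, hind, c, hc0, rfl⟩
        refine ⟨fun i => if h : i ∈ t then c ⟨i, h⟩ else 0, fun i => ?_, ?_⟩
        · by_cases h : i ∈ t
          · simpa [h] using hc0 ⟨i, h⟩
          · simp [h]
        · show (∑ i : t, c i • v ↑i) = ∑ i, (if h : i ∈ t then c ⟨i, h⟩ else 0) • v i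
          rw [← Finset.sum_subset (Finset.subset_univ t)
            (fun x _ hx => by simp [dif_neg hx]),
            Finset.univ_eq_attach, ← Finset.sum_attach t
            (fun i => (if h : i ∈ t then c ⟨i, h⟩ else 0) • v i)]
          exact Finset.sum_congr rfl fun i _ => by simp
    rw [hWeq]
    refine Set.Finite.isClosed_biUnion (Set.toFinite _) (fun t ht => ?_)
    have hker := combMap_ker v t ht
    exact ((combMap v t).isClosedEmbedding_of_injective hker).isClosedMap _
      (by
        have : {c : t → ℝ | ∀ i, 0 ≤ c i} = ⋂ i : t, {c : t → ℝ | 0 ≤ c i} := by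
          ext c; simp [Set.mem_iInter]
        rw [this]
        exact isClosed_iInter fun i => isClosed_le continuous_const (continuous_apply i))
  have hxW : x ∈ W := by
    by_contra hx
    obtain ⟨f, u, hfW, hfx⟩ := geometric_hahn_banach_closed_point hWconv hWclosed hx
    have h0W : (0 : E) ∈ W := ⟨0, fun i => le_refl 0, by simp⟩
    have hu0 : 0 < u := by simpa using hfW 0 h0W
    have hfle : ∀ w ∈ W, f w ≤ 0 := by
      rintro w hwW
      by_contra hw
      push_neg at hw
      obtain ⟨c, hc, hwc⟩ := hwW
      have hpos : (0:ℝ) < u / f w + 1 := by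
        have := div_pos hu0 hw; linarith
      have hmem : ((u / f w + 1) : ℝ) • w ∈ W := by
        refine ⟨fun i => (u / f w + 1) * c i, fun i => mul_nonneg hpos.le (hc i), ?_⟩
        rw [hwc]; simp [Finset.smul_sum, smul_smul]
      have h2 := hfW _ hmem
      rw [map_smul, smul_eq_mul, add_mul, div_mul_cancel₀ _ (ne_of_gt hw), one_mul] at h2
      linarith
    set d : E := (InnerProductSpace.toDual ℝ E).symm f with hd
    have hdip : ∀ w, ⟪d, w⟫ = f w := fun w => InnerProductSpace.toDual_symm_apply
    have hvW : ∀ i, v i ∈ W := by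
      intro i
      refine ⟨fun j => if j = i then 1 else 0, fun j => by by_cases h : j = i <;> simp [h], ?_⟩
      simp [ite_smul]
    have hcon := h d (fun i => by
      rw [real_inner_comm, hdip]
      exact hfle _ (hvW i))
    rw [real_inner_comm, hdip] at hcon
    linarith
  obtain ⟨c, hc, rfl⟩ := hxW
  obtain ⟨t, -, hind, μ, hμ0, hμsum⟩ := caratheodory_cone v Finset.univ c (fun i _ => hc i)
  exact ⟨t, hind, μ, hμ0, hμsum.symm⟩

/-- Coefficient bound for linearly independent conic combinations. -/
lemma coeff_bound [FiniteDimensional ℝ E] {ι : Type*} (v : ι → E) (t : Finset ι) :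
    ∃ c : ℝ, 0 < c ∧ (LinearIndependent ℝ (fun i : t => v i) →
      ∀ μ : ι → ℝ, ∑ i ∈ t, μ i ≤ c * ‖∑ i ∈ t, μ i • v i‖) := by
  by_cases hind : LinearIndependent ℝ (fun i : t => v i)
  · obtain ⟨Kc, hKc, hanti⟩ := (combMap v t).exists_antilipschitzWith (combMap_ker v t hind)
    refine ⟨t.card * Kc + 1, by positivity, fun _ μ => ?_⟩
    set lam : t → ℝ := fun i => μ ↑i with hlam
    have h1 : ‖lam‖ ≤ Kc * ‖combMap v t lam‖ := by
      have := hanti.le_mul_dist lam 0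
      simpa [dist_eq_norm] using this
    have h2 : ∑ i ∈ t, μ i ≤ t.card * ‖lam‖ := by
      rw [← Finset.sum_attach t μ, ← Finset.univ_eq_attach]
      calc ∑ i : t, μ ↑i ≤ ∑ i : t, ‖lam‖ := by
            refine Finset.sum_le_sum fun i _ => ?_
            calc μ ↑i ≤ |μ ↑i| := le_abs_self _
              _ = ‖lam i‖ := rfl
              _ ≤ ‖lam‖ := norm_le_pi_norm lam i
        _ = t.card * ‖lam‖ := by
            rw [Finset.sum_const, Finset.card_univ, Fintype.card_coe, nsmul_eq_mul]
    have h3 : combMap v t lam = ∑ i ∈ t, μ i • v i := by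
      show ∑ i : t, μ ↑i • v ↑i = _
      rw [Finset.univ_eq_attach, Finset.sum_attach t (fun i => μ i • v i)]
    calc ∑ i ∈ t, μ i ≤ t.card * ‖lam‖ := h2
      _ ≤ t.card * (Kc * ‖combMap v t lam‖) := by
          refine mul_le_mul_of_nonneg_left h1 (by positivity)
      _ = (t.card * Kc) * ‖combMap v t lam‖ := by ring
      _ ≤ (t.card * Kc + 1) * ‖∑ i ∈ t, μ i • v i‖ := by
          rw [h3]
          refine mul_le_mul_of_nonneg_right (by linarith) (norm_nonneg _)
  · exact ⟨1, one_pos, fun h => absurd h hind⟩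

end AuxiliaryLemmas

open scoped RealInnerProductSpace

set_option maxHeartbeats 1000000 in
/-- Walkup–Wets: for a polyhedral (finitely generated) closed
convex cone `K`, `s ∈ K`, and a linear map `A : X → E`, the mapping
`S(b*) = {μ ∈ K* ∩ {s}ᗮ : A* μ = b*}` is Lipschitz continuous for the
Hausdorff distance on its domain: there is `L > 0` with
`S(b₁*) ⊆ S(b₂*) + L ‖b₁* - b₂*‖ B` whenever both values are nonempty. -/
theorem walkup_wets_lipschitz
    {E X : Type*} [NormedAddCommGroup E] [InnerProductSpace ℝ E] [FiniteDimensional ℝ E]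
    [NormedAddCommGroup X] [InnerProductSpace ℝ X] [FiniteDimensional ℝ X]
    (K : Set E) (m : ℕ) (gen : Fin m → E)
    (hK : K = {x | ∃ c : Fin m → ℝ, (∀ i, 0 ≤ c i) ∧ x = ∑ i, c i • gen i})
    (s : E) (hs : s ∈ K) (A : X →L[ℝ] E)
    (S : X → Set E)
    (hS : ∀ b, S b = {μ | μ ∈ polarCone K ∧ @inner ℝ _ _ μ s = (0 : ℝ) ∧
        ContinuousLinearMap.adjoint A μ = b}) :
    ∃ L > (0 : ℝ), ∀ b₁ b₂ : X, (S b₁).Nonempty → (S b₂).Nonempty →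
      ∀ μ₁ ∈ S b₁, ∃ μ₂ ∈ S b₂, ‖μ₁ - μ₂‖ ≤ L * ‖b₁ - b₂‖ := by
  classical
  set A' := ContinuousLinearMap.adjoint A with hA'def
  have gen_mem : ∀ i, gen i ∈ K := by
    intro i
    rw [hK]
    refine ⟨fun j => if j = i then 1 else 0, fun j => by by_cases h : j = i <;> simp [h], ?_⟩
    simp [ite_smul]
  -- the index type and the family of "constraint normals"
  set n := Module.finrank ℝ X with hn
  set e := stdOrthonormalBasis ℝ X with he
  set V : (Fin m ⊕ Bool) ⊕ (Fin n × Bool) → E :=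
    Sum.elim (Sum.elim gen (fun b => if b then s else -s))
      (fun p => if p.2 then A (e p.1) else -(A (e p.1))) with hVdef
  -- choose coefficient-bound constants for every subset
  choose c hc using fun t : Finset ((Fin m ⊕ Bool) ⊕ (Fin n × Bool)) => coeff_bound V t
  have hpne : (Finset.univ.powerset :
      Finset (Finset ((Fin m ⊕ Bool) ⊕ (Fin n × Bool)))).Nonempty :=
    ⟨∅, Finset.mem_powerset.2 (Finset.empty_subset _)⟩
  set L : ℝ := Finset.univ.powerset.sup' hpne c + 1 with hL
  have hcL : ∀ t, c t ≤ L := by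
    intro t
    have := Finset.le_sup' c (Finset.mem_powerset.2 (Finset.subset_univ t))
    linarith
  have hLpos : 0 < L := by
    have h1 := Finset.le_sup' c (Finset.mem_powerset.2 (Finset.empty_subset Finset.univ))
    have h2 := (hc ∅).1
    simp only [hL]
    linarith
  refine ⟨L, hLpos, ?_⟩
  intro b₁ b₂ hne₁ hne₂ μ₁ hμ₁
  rw [hS] at hμ₁
  obtain ⟨hμ₁pol, hμ₁s, hμ₁A⟩ := hμ₁
  -- the target set
  set T : Set E := {μ | μ ∈ polarCone K ∧ ⟪μ, s⟫ = 0 ∧ A' μ = b₂} with hT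
  have hTne : T.Nonempty := by rw [hS] at hne₂; exact hne₂
  have hTconv : Convex ℝ T := by
    rintro x ⟨hx1, hx2, hx3⟩ y ⟨hy1, hy2, hy3⟩ a b ha hb hab
    refine ⟨?_, ?_, ?_⟩
    · intro k hk
      have h1 := hx1 k hk
      have h2 := hy1 k hk
      rw [inner_add_left, real_inner_smul_left, real_inner_smul_left]
      exact add_nonpos (mul_nonpos_of_nonneg_of_nonpos ha h1)
        (mul_nonpos_of_nonneg_of_nonpos hb h2)
    · simp [inner_add_left, real_inner_smul_left, hx2, hy2]
    · rw [map_add, map_smul, map_smul, hx3, hy3, ← add_smul, hab, one_smul]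
  have hTclosed : IsClosed T := by
    have : T = (⋂ k ∈ K, {μ : E | ⟪μ, k⟫ ≤ 0}) ∩ ({μ : E | ⟪μ, s⟫ = 0} ∩ A' ⁻¹' {b₂}) := by
      ext μ
      simp only [hT, Set.mem_inter_iff, Set.mem_iInter, Set.mem_setOf_eq, Set.mem_preimage,
        Set.mem_singleton_iff, polarCone]
      try tauto
    rw [this]
    refine IsClosed.inter (isClosed_biInter fun k _ =>
      isClosed_le (Continuous.inner continuous_id continuous_const) continuous_const) ?_
    exact IsClosed.inter
      (isClosed_eq (Continuous.inner continuous_id continuous_const) continuous_const)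
      (isClosed_singleton.preimage A'.continuous)
  -- project μ₁ onto T
  obtain ⟨y, hyT, hproj⟩ :=
    exists_norm_eq_iInf_of_complete_convex hTne (hTclosed.isComplete) hTconv μ₁
  have hchar : ∀ w ∈ T, ⟪μ₁ - y, w - y⟫ ≤ 0 :=
    (norm_eq_iInf_iff_real_inner_le_zero hTconv hyT).1 hproj
  obtain ⟨hypol, hys, hyA⟩ := hyT
  set g : E := μ₁ - y with hg
  -- active constraints
  set J : Finset (Fin m) := Finset.univ.filter (fun i => ⟪y, gen i⟫ = 0) with hJ
  have hyact : ∀ i ∈ J, ⟪y, gen i⟫ = 0 := fun i hi => (Finset.mem_filter.1 hi).2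
  have hyle : ∀ i, ⟪y, gen i⟫ ≤ 0 := fun i => hypol (gen i) (gen_mem i)
  have hystrict : ∀ i ∉ J, ⟪y, gen i⟫ < 0 := by
    intro i hi
    refine lt_of_le_of_ne (hyle i) ?_
    intro h
    exact hi (Finset.mem_filter.2 ⟨Finset.mem_univ i, h⟩)
  -- the modified family, with inactive generators replaced by 0
  set VJ : (Fin m ⊕ Bool) ⊕ (Fin n × Bool) → E :=
    Sum.elim (Sum.elim (fun i => if i ∈ J then gen i else 0) (fun b => if b then s else -s))
      (fun p => if p.2 then A (e p.1) else -(A (e p.1))) with hVJdef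
  -- Farkas hypothesis
  have hfark : ∀ d : E, (∀ j, ⟪VJ j, d⟫ ≤ 0) → ⟪g, d⟫ ≤ 0 := by
    intro d hd
    have hgend : ∀ i ∈ J, ⟪gen i, d⟫ ≤ 0 := by
      intro i hi
      have := hd (Sum.inl (Sum.inl i))
      simpa [hVJdef, if_pos hi] using this
    have hsd : ⟪s, d⟫ = 0 := by
      have h1 := hd (Sum.inl (Sum.inr true))
      have h2 := hd (Sum.inl (Sum.inr false))
      simp only [hVJdef, Sum.elim_inl, Sum.elim_inr, if_true, Bool.false_eq_true, if_false,
        inner_neg_left] at h1 h2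
      linarith
    have hAd : A' d = 0 := by
      have hk : ∀ k : Fin n, ⟪e k, A' d⟫ = 0 := by
        intro k
        have h1 := hd (Sum.inr (k, true))
        have h2 := hd (Sum.inr (k, false))
        simp only [hVJdef, Sum.elim_inr, if_true, Bool.false_eq_true, if_false,
          inner_neg_left] at h1 h2
        have h3 : ⟪A (e k), d⟫ = 0 := le_antisymm h1 (by linarith)
        rw [hA'def, ContinuousLinearMap.adjoint_inner_right]
        exact h3
      have : ⟪A' d, A' d⟫ = 0 := by
        conv_lhs => rw [← e.sum_repr (A' d)]
        rw [sum_inner]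
        refine Finset.sum_eq_zero fun k _ => ?_
        rw [real_inner_smul_left, e.repr_apply_apply, hk k, zero_mul]
      exact inner_self_eq_zero.1 this
    -- find a small positive step τ
    have hev : ∀ i : Fin m, ∀ᶠ τ in nhdsWithin (0:ℝ) (Set.Ioi 0),
        ⟪y, gen i⟫ + τ * ⟪d, gen i⟫ ≤ 0 := by
      intro i
      by_cases hi : i ∈ J
      · filter_upwards [eventually_mem_nhdsWithin] with τ hτ
        rw [hyact i hi, zero_add]
        have : ⟪d, gen i⟫ ≤ 0 := by rw [real_inner_comm]; exact hgend i hi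
        exact mul_nonpos_of_nonneg_of_nonpos (le_of_lt hτ) this
      · have ha : ⟪y, gen i⟫ < 0 := hystrict i hi
        have htend : Filter.Tendsto (fun τ : ℝ => ⟪y, gen i⟫ + τ * ⟪d, gen i⟫)
            (nhdsWithin (0:ℝ) (Set.Ioi 0)) (nhds (⟪y, gen i⟫)) := by
          have hcont : Filter.Tendsto (fun τ : ℝ => ⟪y, gen i⟫ + τ * ⟪d, gen i⟫)
              (nhds 0) (nhds (⟪y, gen i⟫ + 0 * ⟪d, gen i⟫)) :=
            (continuous_const.add (continuous_id.mul continuous_const)).tendsto 0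
          simpa using hcont.mono_left nhdsWithin_le_nhds
        exact (Filter.Tendsto.eventually_lt_const ha htend).mono fun τ h => le_of_lt h
    have hall := (Filter.eventually_all.2 hev).and eventually_mem_nhdsWithin
    obtain ⟨τ, hτ1, hτpos⟩ := hall.exists
    set w : E := y + τ • d with hw
    have hwT : w ∈ T := by
      refine ⟨?_, ?_, ?_⟩
      · intro k hk
        rw [hK] at hk
        obtain ⟨cc, hcc, rfl⟩ := hk
        rw [inner_sum]
        refine Finset.sum_nonpos fun i _ => ?_
        rw [real_inner_smul_right]
        refine mul_nonpos_of_nonneg_of_nonpos (hcc i) ?_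
        rw [hw, inner_add_left, real_inner_smul_left]
        exact hτ1 i
      · have hds : ⟪d, s⟫ = 0 := by rw [real_inner_comm]; exact hsd
        rw [hw, inner_add_left, real_inner_smul_left, hys, hds]
        ring
      · rw [hw, map_add, map_smul, hyA, hAd, smul_zero, add_zero]
    have hch := hchar w hwT
    rw [hw, add_sub_cancel_left, real_inner_smul_right] at hch
    by_contra hcon
    push_neg at hcon
    nlinarith [mul_pos (Set.mem_Ioi.1 hτpos) hcon]
  obtain ⟨t, hind, μc, hμc, hrep⟩ := farkas VJ g hfark
  -- indices of generators in t are active, and VJ = V on t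
  have htJ : ∀ i : Fin m, Sum.inl (Sum.inl i) ∈ t → i ∈ J := by
    intro i hit
    by_contra hiJ
    have := hind.ne_zero (⟨Sum.inl (Sum.inl i), hit⟩ : t)
    simp [hVJdef, if_neg hiJ] at this
  have hVJt : ∀ j ∈ t, VJ j = V j := by
    intro j hj
    rcases j with (i | b) | p
    · simp [hVJdef, hVdef, if_pos (htJ i hj)]
    · rfl
    · rfl
  have hindV : LinearIndependent ℝ (fun i : t => V i) := by
    have heq : (fun i : t => VJ i) = (fun i : t => V i) :=
      funext fun i => hVJt i i.2
    rwa [heq] at hind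
  have hrepV : g = ∑ j ∈ t, μc j • V j :=
    hrep.trans (Finset.sum_congr rfl fun j hj => by rw [hVJt j hj])
  -- the key estimate on each inner product
  set B : ℝ := ‖b₁ - b₂‖ with hB
  have hBnn : 0 ≤ B := norm_nonneg _
  have hA'g : A' g = b₁ - b₂ := by rw [hg, map_sub, hμ₁A, hyA]
  have key : ∀ j ∈ t, ⟪V j, g⟫ ≤ B := by
    intro j hj
    rcases j with (i | b) | ⟨k, b⟩
    · have hiJ : i ∈ J := htJ i hj
      have h1 : ⟪gen i, μ₁⟫ ≤ 0 := by
        rw [real_inner_comm]; exact hμ₁pol (gen i) (gen_mem i)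
      have h2 : ⟪gen i, y⟫ = 0 := by rw [real_inner_comm]; exact hyact i hiJ
      have hV0 : V (Sum.inl (Sum.inl i)) = gen i := by simp [hVdef]
      rw [hV0, hg, inner_sub_right, h2, sub_zero]
      linarith
    · have h1 : ⟪s, μ₁⟫ = 0 := by rw [real_inner_comm]; exact hμ₁s
      have h2 : ⟪s, y⟫ = 0 := by rw [real_inner_comm]; exact hys
      have h3 : ⟪s, g⟫ = 0 := by rw [hg, inner_sub_right, h1, h2, sub_zero]
      cases b
      · have hV0 : V (Sum.inl (Sum.inr false)) = -s := by simp [hVdef]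
        rw [hV0, inner_neg_left, h3, neg_zero]
        exact hBnn
      · have hV0 : V (Sum.inl (Sum.inr true)) = s := by simp [hVdef]
        rw [hV0, h3]
        exact hBnn
    · have h1 : ⟪A (e k), g⟫ = ⟪e k, b₁ - b₂⟫ := by
        rw [← hA'g, hA'def, ContinuousLinearMap.adjoint_inner_right]
      have h2 : |⟪e k, b₁ - b₂⟫| ≤ B := by
        calc |⟪e k, b₁ - b₂⟫| ≤ ‖e k‖ * ‖b₁ - b₂‖ := abs_real_inner_le_norm _ _
          _ = B := by rw [e.orthonormal.1 k, one_mul]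
      cases b
      · have hV0 : V (Sum.inr (k, false)) = -(A (e k)) := by simp [hVdef]
        rw [hV0, inner_neg_left, h1]
        exact neg_le_of_neg_le (neg_le_of_abs_le h2)
      · have hV0 : V (Sum.inr (k, true)) = A (e k) := by simp [hVdef]
        rw [hV0, h1]
        exact le_of_abs_le h2
  -- putting everything together
  have hsum : ‖g‖ ^ 2 ≤ (∑ j ∈ t, μc j) * B := by
    calc ‖g‖ ^ 2 = ⟪g, g⟫ := (real_inner_self_eq_norm_sq g).symm
      _ = ∑ j ∈ t, μc j * ⟪V j, g⟫ := by
          nth_rewrite 1 [hrepV]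
          rw [sum_inner]
          exact Finset.sum_congr rfl fun j _ => real_inner_smul_left _ _ _
      _ ≤ ∑ j ∈ t, μc j * B :=
          Finset.sum_le_sum fun j hj => mul_le_mul_of_nonneg_left (key j hj) (hμc j hj)
      _ = (∑ j ∈ t, μc j) * B := by rw [Finset.sum_mul]
  have hcoef : ∑ j ∈ t, μc j ≤ c t * ‖g‖ := by
    have := (hc t).2 hindV μc
    rwa [← hrepV] at this
  have hfin : ‖g‖ ≤ L * B := by
    by_cases hg0 : ‖g‖ = 0
    · rw [hg0]; exact mul_nonneg hLpos.le hBnn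
    · have hgpos : 0 < ‖g‖ := lt_of_le_of_ne (norm_nonneg g) (Ne.symm hg0)
      have h1 : ‖g‖ ^ 2 ≤ c t * ‖g‖ * B :=
        le_trans hsum (mul_le_mul_of_nonneg_right hcoef hBnn)
      have h2 : ‖g‖ * ‖g‖ ≤ (c t * B) * ‖g‖ := by
        calc ‖g‖ * ‖g‖ = ‖g‖ ^ 2 := (sq ‖g‖).symm
          _ ≤ c t * ‖g‖ * B := h1
          _ = (c t * B) * ‖g‖ := by ring
      have h3 : ‖g‖ ≤ c t * B := le_of_mul_le_mul_right h2 hgpos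
      calc ‖g‖ ≤ c t * B := h3
        _ ≤ L * B := mul_le_mul_of_nonneg_right (hcL t) hBnn
  refine ⟨y, ?_, hfin⟩
  rw [hS]
  exact ⟨hypol, hys, hyA⟩
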